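/- Let ρ be a two-qubit density matrix with both local Bloch vectors zero and diagonal correlation matrix diag(t₁,t₂,t₃). Apply local filters F_{ε₁}⊗F_{ε₂} with F_ε = ε|0⟩⟨0|+|1⟩⟨1|. Then the normalized filtered state has correlation-matrix singular values |t₁|ε₁ε₂/c, |t₂|ε₁ε₂/c, and |(1−ε₁²)(1−ε₂²) + t₃(1+ε₁²)(1+ε₂²)|/(4c) where c = [t₃(1−ε₁²)(1−ε₂²) + (1+ε₁²)(1+ε₂²)]/4. -/

import Mathlib

noncomputable section
open Matrix Kronecker
open scoped ComplexOrder

/-- The Pauli matrices σ₁, σ₂, σ₃. -/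
def σp : Fin 3 → Matrix (Fin 2) (Fin 2) ℂ :=
  ![!![0, 1; 1, 0], !![0, -Complex.I; Complex.I, 0], !![1, 0; 0, -1]]

/-- The local filter F_ε = ε|0⟩⟨0| + |1⟩⟨1| on a qubit. -/
def filt (ε : ℝ) : Matrix (Fin 2) (Fin 2) ℂ :=
  (ε : ℂ) • Matrix.single 0 0 1 + Matrix.single 1 1 1

/-- Correlation matrix W_{jk} = Tr[ρ (σ_j ⊗ σ_k)] (real part; W is in fact real). -/
def corr (ρ : Matrix (Fin 2 × Fin 2) (Fin 2 × Fin 2) ℂ) : Matrix (Fin 3) (Fin 3) ℝ :=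
  Matrix.of fun j k => ((ρ * (σp j ⊗ₖ σp k)).trace).re

lemma kron_conjT (A B : Matrix (Fin 2) (Fin 2) ℂ) : (A ⊗ₖ B)ᴴ = Aᴴ ⊗ₖ Bᴴ := by
  ext ⟨i, j⟩ ⟨k, l⟩
  simp [Matrix.conjTranspose_apply, Matrix.kroneckerMap_apply, mul_comm]

lemma filt_eq (ε : ℝ) : filt ε = !![(ε : ℂ), 0; 0, 1] := by
  ext i j
  fin_cases i <;> fin_cases j <;> simp [filt, Matrix.single]

lemma lit_conjT (ε : ℝ) : (!![(ε : ℂ), 0; 0, 1])ᴴ = !![(ε : ℂ), 0; 0, 1] := by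
  ext i j
  fin_cases i <;> fin_cases j <;> simp

lemma small_trace (ε : ℝ) (l j : Fin 3) :
    (filt ε * σp l * (filt ε)ᴴ * σp j).trace =
      ![![((2 * ε : ℝ) : ℂ), 0, 0], ![0, ((2 * ε : ℝ) : ℂ), 0],
        ![0, 0, ((ε ^ 2 + 1 : ℝ) : ℂ)]] l j := by
  fin_cases l <;> fin_cases j <;>
    simp [filt_eq, lit_conjT, σp, Matrix.trace, Matrix.mul_apply, Fin.sum_univ_two,
      Matrix.diag, Matrix.vecMul, dotProduct, Complex.I_sq, Matrix.vecHead,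
      Matrix.vecTail, Function.comp] <;>
    push_cast <;> ring_nf <;> simp [Complex.I_sq] <;> ring_nf

lemma small_trace1 (ε : ℝ) (j : Fin 3) :
    (filt ε * (filt ε)ᴴ * σp j).trace = ![0, 0, ((ε ^ 2 - 1 : ℝ) : ℂ)] j := by
  fin_cases j <;>
    simp [filt_eq, lit_conjT, σp, Matrix.trace, Matrix.mul_apply, Fin.sum_univ_two,
      Matrix.diag, Matrix.vecMul, dotProduct, Complex.I_sq, Matrix.vecHead,
      Matrix.vecTail, Function.comp] <;>
    push_cast <;> ring_nf <;> simp [Complex.I_sq] <;> ring_nf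

lemma key_trace (t : Fin 3 → ℝ) (ε1 ε2 c : ℝ) (j k : Fin 3) :
      (((c : ℂ)⁻¹ • ((filt ε1 ⊗ₖ filt ε2) *
          (((1 / 4 : ℝ) : ℂ) • ((1 : Matrix (Fin 2 × Fin 2) (Fin 2 × Fin 2) ℂ) +
            ∑ l : Fin 3, ((t l : ℂ) • (σp l ⊗ₖ σp l)))) *
          (filt ε1 ⊗ₖ filt ε2)ᴴ)) * (σp j ⊗ₖ σp k)).trace
      = (c : ℂ)⁻¹ * ((1 / 4 : ℝ) : ℂ) *
        ((filt ε1 * (filt ε1)ᴴ * σp j).trace * (filt ε2 * (filt ε2)ᴴ * σp k).trace +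
         ∑ l : Fin 3, (t l : ℂ) *
           ((filt ε1 * σp l * (filt ε1)ᴴ * σp j).trace *
            (filt ε2 * σp l * (filt ε2)ᴴ * σp k).trace)) := by
  rw [kron_conjT]
  simp only [Matrix.smul_mul, Matrix.mul_smul, Matrix.trace_smul, smul_eq_mul,
    Matrix.mul_add, Matrix.add_mul, Matrix.trace_add, Matrix.mul_one, Matrix.mul_sum,
    Matrix.sum_mul, Matrix.trace_sum, ← Matrix.mul_kronecker_mul, Matrix.trace_kronecker,
    Finset.mul_sum, mul_assoc]

lemma re_eq {z : ℂ} {r : ℝ} (h : z = (r : ℂ)) : z.re = r := by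
  rw [h]; exact Complex.ofReal_re _

lemma corr_eq (t : Fin 3 → ℝ) (ε1 ε2 c : ℝ) :
    corr ((c : ℂ)⁻¹ • ((filt ε1 ⊗ₖ filt ε2) *
          (((1 / 4 : ℝ) : ℂ) • ((1 : Matrix (Fin 2 × Fin 2) (Fin 2 × Fin 2) ℂ) +
            ∑ l : Fin 3, ((t l : ℂ) • (σp l ⊗ₖ σp l)))) *
          (filt ε1 ⊗ₖ filt ε2)ᴴ))
    = Matrix.of ![![c⁻¹ * (t 0 * ε1 * ε2), 0, 0], ![0, c⁻¹ * (t 1 * ε1 * ε2), 0],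
        ![0, 0, c⁻¹ * (((1 - ε1 ^ 2) * (1 - ε2 ^ 2) + t 2 * (1 + ε1 ^ 2) * (1 + ε2 ^ 2)) / 4)]]
    := by
  ext j k
  simp only [corr, Matrix.of_apply, key_trace]
  simp only [Fin.sum_univ_three, small_trace, small_trace1]
  fin_cases j <;> fin_cases k <;>
    refine re_eq ?_ <;>
    simp [-mul_eq_mul_left_iff, -mul_eq_mul_right_iff, Matrix.vecHead, Matrix.vecTail] <;>
    push_cast <;> ring

set_option maxHeartbeats 1000000 in
/-- For a Bell-diagonal state ρ = (1/4)(I + Σⱼ tⱼ σⱼ⊗σⱼ) (null local Bloch vectors,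
diagonal correlation matrix diag(t₁,t₂,t₃)) filtered by F_{ε₁}⊗F_{ε₂}, the normalized
filtered state has correlation-matrix singular values |t₁|ε₁ε₂/c, |t₂|ε₁ε₂/c and
|(1−ε₁²)(1−ε₂²)+t₃(1+ε₁²)(1+ε₂²)|/(4c), where
c = [t₃(1−ε₁²)(1−ε₂²)+(1+ε₁²)(1+ε₂²)]/4. -/
theorem filtered_bell_diagonal_state (t : Fin 3 → ℝ) (ε1 ε2 : ℝ)
    (hε1 : ε1 ∈ Set.Ioc (0 : ℝ) 1) (hε2 : ε2 ∈ Set.Ioc (0 : ℝ) 1)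
    (ρ : Matrix (Fin 2 × Fin 2) (Fin 2 × Fin 2) ℂ)
    (hρ : ρ = ((1 / 4 : ℝ) : ℂ) • ((1 : Matrix (Fin 2 × Fin 2) (Fin 2 × Fin 2) ℂ) +
        ∑ j : Fin 3, ((t j : ℝ) : ℂ) • (σp j ⊗ₖ σp j)))
    (hdm : ρ.PosSemidef)
    (c : ℝ)
    (hc : c = (t 2 * (1 - ε1 ^ 2) * (1 - ε2 ^ 2) + (1 + ε1 ^ 2) * (1 + ε2 ^ 2)) / 4)
    (ρ'' : Matrix (Fin 2 × Fin 2) (Fin 2 × Fin 2) ℂ)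
    (hρ'' : ρ'' = ((c : ℝ) : ℂ)⁻¹ •
      ((filt ε1 ⊗ₖ filt ε2) * ρ * (filt ε1 ⊗ₖ filt ε2)ᴴ)) :
    ∀ x : ℝ, (x • (1 : Matrix (Fin 3) (Fin 3) ℝ) - (corr ρ'')ᵀ * corr ρ'').det =
      (x - (|t 0| * ε1 * ε2 / c) ^ 2) * (x - (|t 1| * ε1 * ε2 / c) ^ 2) *
      (x - (|(1 - ε1 ^ 2) * (1 - ε2 ^ 2) + t 2 * (1 + ε1 ^ 2) * (1 + ε2 ^ 2)| /
        (4 * c)) ^ 2) := by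
  intro x
  subst hρ hρ''
  rw [corr_eq t ε1 ε2 c]
  have key : (x • (1 : Matrix (Fin 3) (Fin 3) ℝ) -
      (Matrix.of ![![c⁻¹ * (t 0 * ε1 * ε2), 0, 0], ![0, c⁻¹ * (t 1 * ε1 * ε2), 0],
        ![0, 0, c⁻¹ * (((1 - ε1 ^ 2) * (1 - ε2 ^ 2) + t 2 * (1 + ε1 ^ 2) * (1 + ε2 ^ 2)) / 4)]])ᵀ *
      Matrix.of ![![c⁻¹ * (t 0 * ε1 * ε2), 0, 0], ![0, c⁻¹ * (t 1 * ε1 * ε2), 0],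
        ![0, 0, c⁻¹ * (((1 - ε1 ^ 2) * (1 - ε2 ^ 2) + t 2 * (1 + ε1 ^ 2) * (1 + ε2 ^ 2)) / 4)]])
      = !![x - (|t 0| * ε1 * ε2 / c) ^ 2, 0, 0; 0, x - (|t 1| * ε1 * ε2 / c) ^ 2, 0;
          0, 0, x - (|(1 - ε1 ^ 2) * (1 - ε2 ^ 2) + t 2 * (1 + ε1 ^ 2) * (1 + ε2 ^ 2)| /
            (4 * c)) ^ 2] := by
    ext i j
    fin_cases i <;> fin_cases j <;>
      simp [Matrix.mul_apply, Fin.sum_univ_three, Matrix.one_apply, Matrix.vecHead,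
        Matrix.vecTail, div_pow, mul_pow, sq_abs] <;>
      ring
  rw [key, Matrix.det_fin_three]
  simp
  try ring
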